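/- Let q > 0, let T be an infinite tree in which every vertex has finite degree, let S be a nonempty finite vertex subset of T with S ∩ A_q = ∅, and let C be a (possibly empty) q-isolated core of T containing all vertices of A_q that are adjacent to a vertex of S. Then Δ_q(S ∪ C) ≤ Δ_q C. -/

import Mathlib

open SimpleGraph

variable {V : Type*}

/-- The edge boundary `∂S` of a vertex set `S`: the set of edges of `G` with one endpoint
in `S` and the other endpoint outside `S`. -/
def edgeBdry (G : SimpleGraph V) (S : Set V) : Set (Sym2 V) :=
  {e | e ∈ G.edgeSet ∧ ∃ x ∈ S, ∃ y ∉ S, e = s(x, y)}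

/-- The `q`-isolation `Δ_q S := q·|S| − |∂S|` of a vertex set `S`. -/
noncomputable def isolation (G : SimpleGraph V) (q : ℝ) (S : Set V) : ℝ :=
  q * (S.ncard : ℝ) - ((edgeBdry G S).ncard : ℝ)

/-- A finite vertex set `S` is a `q`-isolated core if `Δ_q S > Δ_q A` for every
proper subset `A ⊊ S`. -/
def IsIsolatedCore (G : SimpleGraph V) (q : ℝ) (S : Set V) : Prop :=
  S.Finite ∧ ∀ A : Set V, A ⊂ S → isolation G q A < isolation G q S

/-- `A_q`: the union of all `q`-isolated cores of `G`. -/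
def coreUnion (G : SimpleGraph V) (q : ℝ) : Set V :=
  ⋃₀ {S : Set V | IsIsolatedCore G q S}

/-- A `q`-island: a connected component of (the subgraph of `G` induced by) `A_q`,
characterised as a nonempty connected subset of `A_q` which is closed under
adjacency within `A_q`. -/
def IsIsland (G : SimpleGraph V) (q : ℝ) (C : Set V) : Prop :=
  C ⊆ coreUnion G q ∧ (G.induce C).Connected ∧
    ∀ x ∈ C, ∀ y ∈ coreUnion G q, G.Adj x y → y ∈ C

/-- The anchored expansion constant
`i(G) = lim_{n→∞} inf { |∂K|/|K| : o ∈ K ⊆ G connected, n ≤ |K| < ∞ }`;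
since the infima are nondecreasing in `n`, the limit equals the supremum over `n`. -/
noncomputable def anchoredExpansion (G : SimpleGraph V) (o : V) : ℝ :=
  ⨆ n : ℕ, sInf {r : ℝ | ∃ K : Set V, o ∈ K ∧ K.Finite ∧ (G.induce K).Connected ∧
    n ≤ K.ncard ∧ r = ((edgeBdry G K).ncard : ℝ) / (K.ncard : ℝ)}

/-- The set of children of a vertex `x` in the tree rooted at `o`: the neighbours of `x`
at larger graph distance from the root. -/
def children (G : SimpleGraph V) (o x : V) : Set V :=
  {y | G.Adj x y ∧ G.dist o y = G.dist o x + 1}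

/-- Let `q > 0`, let `T` be an infinite tree in which every vertex has finite degree, let
`S` be a nonempty finite vertex subset of `T` with `S ∩ A_q = ∅`, and let `C` be a
(possibly empty) `q`-isolated core of `T` containing all vertices of `A_q` that are
adjacent to a vertex of `S`. Then `Δ_q(S ∪ C) ≤ Δ_q C`. -/
theorem stmt12 (T : SimpleGraph V) [Infinite V] (htree : T.IsTree)
    (hloc : ∀ v : V, (T.neighborSet v).Finite)
    (q : ℝ) (hq : 0 < q) (S C : Set V) (hSne : S.Nonempty) (hSfin : S.Finite)
    (hdisj : S ∩ coreUnion T q = ∅) (hC : IsIsolatedCore T q C)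
    (hCadj : ∀ x ∈ coreUnion T q, (∃ y ∈ S, T.Adj x y) → x ∈ C) :
    isolation T q (S ∪ C) ≤ isolation T q C := by
  by_contra hcon
  push_neg at hcon
  -- the collection of subsets of S ∪ C is finite
  have hFfin : (S ∪ C).Finite := hSfin.union hC.1
  have hPfin : {A : Set V | A ⊆ S ∪ C}.Finite := hFfin.finite_subsets
  -- maximizers of isolation over this collection
  obtain ⟨B0, hB0P, hB0max⟩ := Set.Finite.exists_maximalFor (isolation T q)
    _ hPfin ⟨S ∪ C, Set.Subset.rfl⟩
  have hB0max' : ∀ A : Set V, A ⊆ S ∪ C → isolation T q A ≤ isolation T q B0 := by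
    intro A hA
    by_contra hlt
    push_neg at hlt
    exact absurd (hB0max hA hlt.le) (not_le.mpr hlt)
  set M : Set (Set V) := {A : Set V | A ⊆ S ∪ C ∧ isolation T q A = isolation T q B0} with hM
  have hMfin : M.Finite := hPfin.subset (fun A hA => hA.1)
  obtain ⟨B, hBM, hBmin⟩ := Set.Finite.exists_minimalFor (fun A => A.ncard)
    _ hMfin ⟨B0, hB0P, rfl⟩
  have hBfin : B.Finite := hFfin.subset hBM.1
  -- B is a q-isolated core
  have hcore : IsIsolatedCore T q B := by
    refine ⟨hBfin, fun A hA => ?_⟩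
    have hAsub : A ⊆ S ∪ C := hA.subset.trans hBM.1
    have hle : isolation T q A ≤ isolation T q B := by
      rw [hBM.2]; exact hB0max' A hAsub
    rcases lt_or_eq_of_le hle with h | h
    · exact h
    · exfalso
      have hAM : A ∈ M := ⟨hAsub, by rw [← hBM.2, h]⟩
      have hlt : A.ncard < B.ncard := Set.ncard_lt_ncard hA hBfin
      exact absurd (hBmin hAM hlt.le) (not_le.mpr hlt)
  -- hence isolation of B exceeds that of C
  have h1 : isolation T q C < isolation T q B := by
    rw [hBM.2]
    exact lt_of_lt_of_le hcon (hB0max' (S ∪ C) Set.Subset.rfl)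
  -- B is not contained in C
  have hnsub : ¬ B ⊆ C := by
    intro hsub
    rcases eq_or_ssubset_of_subset hsub with h | h
    · rw [h] at h1; exact lt_irrefl _ h1
    · exact absurd (hC.2 B h) (not_lt.mpr h1.le)
  obtain ⟨s, hsB, hsC⟩ := Set.not_subset.mp hnsub
  have hsS : s ∈ S := (hBM.1 hsB).resolve_right hsC
  have : s ∈ coreUnion T q := ⟨B, hcore, hsB⟩
  exact absurd (Set.mem_inter hsS this) (by rw [hdisj]; exact Set.notMem_empty s)
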